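/- Let K ≥ 1, k = (K-1)/(K+1), and let f = u + iv = g + conj(h) be a harmonic K-quasiregular mapping on the unit disk 𝔻 (g, h holomorphic with |h'| ≤ k|g'| on 𝔻), and assume u = Re f > 0 on 𝔻. Then at every point of 𝔻, Δ|f| ≤ K²·Δ(u log u), where Δ denotes the Laplace operator. -/

import Mathlib

open Complex Metric MeasureTheory Topology Filter

/-- The planar Laplacian `Δw = ∂²w/∂x² + ∂²w/∂y²` of a function `w : ℂ → ℝ`. -/
noncomputable def lap2 (w : ℂ → ℝ) (z : ℂ) : ℝ :=
  iteratedFDeriv ℝ 2 w z ![1, 1] + iteratedFDeriv ℝ 2 w z ![Complex.I, Complex.I]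

lemma clm_decomp (L : ℂ →L[ℝ] ℝ) :
    L = L 1 • Complex.reCLM + L I • Complex.imCLM := by
  ext v
  have hv : v = v.re • (1:ℂ) + v.im • I := by
    simp [Complex.real_smul, Complex.re_add_im]
  have h2 := congrArg L hv
  rw [map_add, L.map_smul, L.map_smul] at h2
  rw [h2]
  simp
  ring

lemma lap2_eq_of {w p q : ℂ → ℝ} {s : Set ℂ} (hs : IsOpen s) {z : ℂ} (hz : z ∈ s)
    (hw : ∀ y ∈ s, ∃ L : ℂ →L[ℝ] ℝ, HasFDerivAt w L y ∧ L 1 = p y ∧ L I = q y)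
    {P Q : ℂ →L[ℝ] ℝ} (hP : HasFDerivAt p P z) (hQ : HasFDerivAt q Q z) :
    lap2 w z = P 1 + Q I := by
  have hD : ∀ y ∈ s, fderiv ℝ w y = p y • Complex.reCLM + q y • Complex.imCLM := by
    intro y hy
    obtain ⟨L, hL, h1, hI⟩ := hw y hy
    rw [hL.fderiv, clm_decomp L, h1, hI]
  have hev : fderiv ℝ w =ᶠ[𝓝 z] fun y => p y • Complex.reCLM + q y • Complex.imCLM :=
    Filter.eventuallyEq_of_mem (hs.mem_nhds hz) hD
  have hD' : HasFDerivAt (fun y => p y • Complex.reCLM + q y • Complex.imCLM)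
      (P.smulRight Complex.reCLM + Q.smulRight Complex.imCLM) z :=
    (hP.smul_const Complex.reCLM).add (hQ.smul_const Complex.imCLM)
  have hkey : fderiv ℝ (fderiv ℝ w) z
      = P.smulRight Complex.reCLM + Q.smulRight Complex.imCLM := by
    rw [hev.fderiv_eq, hD'.fderiv]
  unfold lap2
  rw [iteratedFDeriv_two_apply, iteratedFDeriv_two_apply, hkey]
  simp


lemma lap2_congr {w₁ w₂ : ℂ → ℝ} {z : ℂ} (h : w₁ =ᶠ[𝓝 z] w₂) : lap2 w₁ z = lap2 w₂ z := by
  unfold lap2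
  rw [iteratedFDeriv_two_apply, iteratedFDeriv_two_apply, iteratedFDeriv_two_apply,
    iteratedFDeriv_two_apply, (h.fderiv).fderiv_eq]

/-- derivative of `g + conj h` -/
lemma hasFDerivAt_addconj {g h : ℂ → ℂ} {y dgy dhy : ℂ}
    (hgy : HasDerivAt g dgy y) (hhy : HasDerivAt h dhy y) :
    ∃ LF : ℂ →L[ℝ] ℂ, HasFDerivAt (fun w => g w + (starRingEnd ℂ) (h w)) LF y ∧
      ∀ v, LF v = v * dgy + (starRingEnd ℂ) (v * dhy) := by
  have hg' : HasFDerivAt g (((1 : ℂ →L[ℂ] ℂ).smulRight dgy).restrictScalars ℝ) y :=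
    (hgy.hasFDerivAt).restrictScalars ℝ
  have hh' : HasFDerivAt h (((1 : ℂ →L[ℂ] ℂ).smulRight dhy).restrictScalars ℝ) y :=
    (hhy.hasFDerivAt).restrictScalars ℝ
  have hconj : HasFDerivAt (fun w => (starRingEnd ℂ) (h w))
      ((Complex.conjCLE.toContinuousLinearMap).comp
        (((1 : ℂ →L[ℂ] ℂ).smulRight dhy).restrictScalars ℝ)) y :=
    (Complex.conjCLE.toContinuousLinearMap.hasFDerivAt).comp y hh'
  refine ⟨_, hg'.add hconj, ?_⟩
  intro v
  simp [smul_eq_mul]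

/-- derivative of `abs ∘ F` -/
lemma hasFDerivAt_abs_comp {F : ℂ → ℂ} {y : ℂ} {LF : ℂ →L[ℝ] ℂ}
    (hF : HasFDerivAt F LF y) (hne : F y ≠ 0) :
    ∃ L : ℂ →L[ℝ] ℝ, HasFDerivAt (fun w => ‖F w‖) L y ∧
      ∀ v, L v = (LF v * (starRingEnd ℂ) (F y)).re / ‖F y‖ := by
  have hA : HasFDerivAt (fun w => (F w).re) (Complex.reCLM.comp LF) y :=
    (Complex.reCLM.hasFDerivAt).comp y hF
  have hB : HasFDerivAt (fun w => (F w).im) (Complex.imCLM.comp LF) y :=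
    (Complex.imCLM.hasFDerivAt).comp y hF
  have hN : HasFDerivAt (fun w => (F w).re * (F w).re + (F w).im * (F w).im)
      (((F y).re • (Complex.reCLM.comp LF) + (F y).re • (Complex.reCLM.comp LF))
        + ((F y).im • (Complex.imCLM.comp LF) + (F y).im • (Complex.imCLM.comp LF))) y :=
    (hA.mul hA).add (hB.mul hB)
  have hNne : (F y).re * (F y).re + (F y).im * (F y).im ≠ 0 := by
    have := Complex.normSq_pos.mpr hne
    rw [Complex.normSq_apply] at this
    exact ne_of_gt this
  have hS : HasDerivAt Real.sqrt
      (1 / (2 * Real.sqrt ((F y).re * (F y).re + (F y).im * (F y).im)))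
      ((F y).re * (F y).re + (F y).im * (F y).im) := Real.hasDerivAt_sqrt hNne
  have hcomp := hS.comp_hasFDerivAt y hN
  have heq : (fun w => ‖F w‖)
      = fun w => Real.sqrt ((F w).re * (F w).re + (F w).im * (F w).im) := by
    funext w
    rw [Complex.norm_def, Complex.normSq_apply]
  refine ⟨(1 / (2 * Real.sqrt ((F y).re * (F y).re + (F y).im * (F y).im))) •
      ((F y).re • Complex.reCLM.comp LF + (F y).re • Complex.reCLM.comp LF
        + ((F y).im • Complex.imCLM.comp LF + (F y).im • Complex.imCLM.comp LF)),
      by rw [heq]; exact hcomp, ?_⟩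
  intro v
  have habs : ‖F y‖ = Real.sqrt ((F y).re * (F y).re + (F y).im * (F y).im) := by
    rw [Complex.norm_def, Complex.normSq_apply]
  have hpos : 0 < Real.sqrt ((F y).re * (F y).re + (F y).im * (F y).im) := by
    rw [← habs]; exact norm_pos_iff.mpr hne
  simp only [ContinuousLinearMap.coe_smul', Pi.smul_apply, ContinuousLinearMap.add_apply,
    ContinuousLinearMap.coe_comp', Function.comp_apply, Complex.reCLM_apply, Complex.imCLM_apply,
    smul_eq_mul, Complex.mul_re, Complex.conj_re, Complex.conj_im, habs]
  field_simp
  ring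

lemma hasFDerivAt_xlogx_comp {r : ℂ → ℝ} {y : ℂ} {Lr : ℂ →L[ℝ] ℝ}
    (hr : HasFDerivAt r Lr y) (hpos : 0 < r y) :
    ∃ L : ℂ →L[ℝ] ℝ, HasFDerivAt (fun w => r w * Real.log (r w)) L y ∧
      ∀ v, L v = (Real.log (r y) + 1) * Lr v := by
  have hlog : HasDerivAt Real.log (r y)⁻¹ (r y) := Real.hasDerivAt_log (ne_of_gt hpos)
  have hlc : HasFDerivAt (fun w => Real.log (r w)) ((r y)⁻¹ • Lr) y :=
    hlog.comp_hasFDerivAt y hr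
  have hmul := hr.mul hlc
  refine ⟨_, hmul, ?_⟩
  intro v
  simp only [ContinuousLinearMap.add_apply, ContinuousLinearMap.coe_smul', Pi.smul_apply,
    smul_eq_mul]
  field_simp
  ring

lemma final_ineq (K : ℝ) (hK : 1 ≤ K) (c d w0 : ℂ) (hw : 0 < w0.re)
    (hqr : ‖d‖ ≤ (K - 1) / (K + 1) * ‖c‖) :
    2*(‖c‖^2 + ‖d‖^2)/‖w0‖
      - ((((c + (starRingEnd ℂ) d) * (starRingEnd ℂ) w0).re)^2
         + (((I*c + (starRingEnd ℂ) (I*d)) * (starRingEnd ℂ) w0).re)^2)/‖w0‖^3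
    ≤ K^2 * (‖c+d‖^2 / w0.re) := by
  have hw0 : w0 ≠ 0 := fun h0 => by simp [h0] at hw
  have hmpos : 0 < ‖w0‖ := norm_pos_iff.mpr hw0
  set m := ‖w0‖ with hm
  have hum : w0.re ≤ m := Complex.re_le_norm w0
  set s := ‖c‖ with hsd
  set t := ‖d‖ with htd
  have hs0 : 0 ≤ s := norm_nonneg c
  have ht0 : 0 ≤ t := norm_nonneg d
  have hK1 : (0:ℝ) < K + 1 := by linarith
  have hqr' : t * (K+1) ≤ (K-1) * s := by
    rw [div_mul_eq_mul_div] at hqr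
    exact (le_div_iff₀ hK1).mp hqr
  have hts : t ≤ s := by nlinarith
  -- lower bound on the X-term
  set a := c * (starRingEnd ℂ) w0 with ha
  set b := (starRingEnd ℂ) d * (starRingEnd ℂ) w0 with hb
  have hX1 : ((c + (starRingEnd ℂ) d) * (starRingEnd ℂ) w0) = a + b := by rw [ha, hb]; ring
  have hX2 : ((I*c + (starRingEnd ℂ) (I*d)) * (starRingEnd ℂ) w0) = I * (a - b) := by
    rw [ha, hb]; simp [map_mul, Complex.conj_I]; ring
  have habre : -(‖a‖ * ‖b‖) ≤ (a*b).re := by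
    have h1 := Complex.abs_re_le_norm (a*b)
    have h2 := neg_abs_le ((a*b).re)
    rw [norm_mul] at h1
    linarith
  have habs_a : ‖a‖ = s * m := by rw [ha, norm_mul, Complex.norm_conj]
  have habs_b : ‖b‖ = t * m := by rw [hb, norm_mul, Complex.norm_conj, Complex.norm_conj]
  have hkey : ((a+b).re)^2 + ((I*(a-b)).re)^2
      = ‖a‖^2 + ‖b‖^2 + 2*(a*b).re := by
    rw [Complex.sq_norm, Complex.sq_norm]
    simp [Complex.normSq_apply, Complex.add_re, Complex.sub_im, Complex.mul_re, Complex.mul_im,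
      Complex.I_re, Complex.I_im, Complex.sub_re, Complex.add_im]
    ring
  have hXlb : (s - t)^2 * m^2 ≤ ((a+b).re)^2 + ((I*(a-b)).re)^2 := by
    rw [habs_a, habs_b] at habre
    rw [hkey, habs_a, habs_b]
    nlinarith [habre]
  rw [hX1, hX2]
  -- step 1
  have h6 : (s-t)^2/m ≤ (((a+b).re)^2 + ((I*(a-b)).re)^2)/m^3 := by
    rw [div_le_div_iff₀ hmpos (pow_pos hmpos 3)]
    nlinarith [hXlb]
  have h7 : 2*(s^2+t^2)/m - (s-t)^2/m = (s+t)^2/m := by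
    field_simp; ring
  have step1 : 2*(s^2+t^2)/m - (((a+b).re)^2 + ((I*(a-b)).re)^2)/m^3 ≤ (s+t)^2/m := by
    linarith
  have step2 : (s+t)^2/m ≤ (s+t)^2/w0.re := by
    apply div_le_div_of_nonneg_left (by positivity) hw hum
  have hcd : s - t ≤ ‖c+d‖ := by
    have := norm_add_le (c+d) (-d)
    simp at this
    linarith
  have step3 : (s+t)^2 ≤ K^2 * ‖c+d‖^2 := by
    have hA0 : (0:ℝ) ≤ ‖c+d‖ := norm_nonneg _
    have h8 : s + t ≤ K * (s - t) := by nlinarith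
    have h9 : K * (s - t) ≤ K * ‖c+d‖ :=
      mul_le_mul_of_nonneg_left hcd (by linarith)
    have h10 : (s+t)^2 ≤ (K * ‖c+d‖)^2 :=
      pow_le_pow_left₀ (by linarith) (h8.trans h9) 2
    calc (s+t)^2 ≤ (K * ‖c+d‖)^2 := h10
      _ = K^2 * ‖c+d‖^2 := by ring
  have step4 : (s+t)^2/w0.re ≤ K^2 * ‖c+d‖^2 / w0.re := by
    gcongr
  have step5 : K^2 * ‖c+d‖^2 / w0.re = K^2 * (‖c+d‖^2 / w0.re) :=
    mul_div_assoc _ _ _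
  linarith

lemma hasFDerivAt_reC {φ : ℂ → ℂ} {y dy : ℂ} (hφ : HasDerivAt φ dy y) :
    ∃ L : ℂ →L[ℝ] ℝ, HasFDerivAt (fun w => (φ w).re) L y ∧ ∀ v, L v = (v * dy).re := by
  refine ⟨Complex.reCLM.comp (((1 : ℂ →L[ℂ] ℂ).smulRight dy).restrictScalars ℝ),
    Complex.reCLM.hasFDerivAt.comp y ((hφ.hasFDerivAt).restrictScalars ℝ), fun v => ?_⟩
  simp [smul_eq_mul]


set_option maxHeartbeats 2000000 in
/-- **Key lemma:** if `f = u + iv = g + conj h` is a harmonic `K`-quasiregular mapping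
on the unit disk with `u = Re f > 0`, then `Δ|f| ≤ K² Δ(u log u)` on `𝔻`. -/
theorem laplacian_abs_le (K : ℝ) (hK : 1 ≤ K)
    (g h f : ℂ → ℂ) (u : ℂ → ℝ)
    (hg : DifferentiableOn ℂ g (ball (0:ℂ) 1))
    (hh : DifferentiableOn ℂ h (ball (0:ℂ) 1))
    (hqr : ∀ z ∈ ball (0:ℂ) 1,
      ‖deriv h z‖ ≤ (K - 1) / (K + 1) * ‖deriv g z‖)
    (hf : ∀ z ∈ ball (0:ℂ) 1, f z = g z + (starRingEnd ℂ) (h z))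
    (hu : ∀ z ∈ ball (0:ℂ) 1, u z = (f z).re)
    (hupos : ∀ z ∈ ball (0:ℂ) 1, 0 < u z) :
    ∀ z ∈ ball (0:ℂ) 1,
      lap2 (fun w => ‖f w‖) z ≤
        K ^ 2 * lap2 (fun w => u w * Real.log (u w)) z := by
  intro z hz
  have hso : IsOpen (ball (0:ℂ) 1) := isOpen_ball
  -- first and second complex derivatives
  have hgd : ∀ y ∈ ball (0:ℂ) 1, HasDerivAt g (deriv g y) y := fun y hy =>
    (hg.differentiableAt (hso.mem_nhds hy)).hasDerivAt
  have hhd : ∀ y ∈ ball (0:ℂ) 1, HasDerivAt h (deriv h y) y := fun y hy =>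
    (hh.differentiableAt (hso.mem_nhds hy)).hasDerivAt
  have hg2 : ∀ y ∈ ball (0:ℂ) 1, HasDerivAt (deriv g) (deriv (deriv g) y) y := fun y hy =>
    ((((hg.analyticOnNhd hso).deriv).differentiableOn).differentiableAt (hso.mem_nhds hy)).hasDerivAt
  have hh2 : ∀ y ∈ ball (0:ℂ) 1, HasDerivAt (deriv h) (deriv (deriv h) y) y := fun y hy =>
    ((((hh.analyticOnNhd hso).deriv).differentiableOn).differentiableAt (hso.mem_nhds hy)).hasDerivAt
  -- positivity facts
  have hFre : ∀ y ∈ ball (0:ℂ) 1, 0 < (g y + (starRingEnd ℂ) (h y)).re := by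
    intro y hy
    have := hupos y hy
    rw [hu y hy, hf y hy] at this
    exact this
  have hFne : ∀ y ∈ ball (0:ℂ) 1, g y + (starRingEnd ℂ) (h y) ≠ 0 := by
    intro y hy h0
    have := hFre y hy
    rw [h0] at this
    simp at this
  -- rewrite both laplacians
  have hcongrA : lap2 (fun w => ‖f w‖) z
      = lap2 (fun y => ‖g y + (starRingEnd ℂ) (h y)‖) z := by
    apply lap2_congr
    filter_upwards [hso.mem_nhds hz] with y hy
    rw [hf y hy]
  have hcongrB : lap2 (fun w => u w * Real.log (u w)) z
      = lap2 (fun y => (g y + h y).re * Real.log ((g y + h y).re)) z := by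
    apply lap2_congr
    filter_upwards [hso.mem_nhds hz] with y hy
    rw [hu y hy, hf y hy]
    simp
  rw [hcongrA, hcongrB]
  -- === side A: derivative data at z ===
  obtain ⟨LF, hLF, hLFv⟩ := hasFDerivAt_addconj (hgd z hz) (hhd z hz)
  obtain ⟨Lm, hLm, hLmv⟩ := hasFDerivAt_abs_comp hLF (hFne z hz)
  have hmpos : 0 < ‖g z + (starRingEnd ℂ) (h z)‖ :=
    norm_pos_iff.mpr (hFne z hz)
  obtain ⟨La, hLa, hLav⟩ := hasFDerivAt_addconj (hg2 z hz) (hh2 z hz)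
  obtain ⟨LaI, hLaI, hLaIv⟩ := hasFDerivAt_addconj
    ((hg2 z hz).const_mul I) ((hh2 z hz).const_mul I)
  have hb : HasFDerivAt (fun y => (starRingEnd ℂ) (g y + (starRingEnd ℂ) (h y)))
      ((Complex.conjCLE.toContinuousLinearMap).comp LF) z :=
    (Complex.conjCLE.toContinuousLinearMap.hasFDerivAt).comp z hLF
  have hminv : HasFDerivAt (fun y => (‖g y + (starRingEnd ℂ) (h y)‖)⁻¹)
      ((-(‖g z + (starRingEnd ℂ) (h z)‖ ^ 2)⁻¹) • Lm) z :=
    (hasDerivAt_inv (ne_of_gt hmpos)).comp_hasFDerivAt z hLm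
  -- numerators
  have hnumA : HasFDerivAt
      (fun y => ((deriv g y + (starRingEnd ℂ) (deriv h y))
        * (starRingEnd ℂ) (g y + (starRingEnd ℂ) (h y))).re)
      (Complex.reCLM.comp
        (((deriv g z + (starRingEnd ℂ) (deriv h z)) • ((Complex.conjCLE.toContinuousLinearMap).comp LF))
          + ((starRingEnd ℂ) (g z + (starRingEnd ℂ) (h z))) • La)) z :=
    (Complex.reCLM.hasFDerivAt).comp z (hLa.mul hb)
  have hnumAI : HasFDerivAt
      (fun y => ((I * deriv g y + (starRingEnd ℂ) (I * deriv h y))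
        * (starRingEnd ℂ) (g y + (starRingEnd ℂ) (h y))).re)
      (Complex.reCLM.comp
        (((I * deriv g z + (starRingEnd ℂ) (I * deriv h z)) • ((Complex.conjCLE.toContinuousLinearMap).comp LF))
          + ((starRingEnd ℂ) (g z + (starRingEnd ℂ) (h z))) • LaI)) z :=
    (Complex.reCLM.hasFDerivAt).comp z (hLaI.mul hb)
  -- full derivatives of pA and qA
  have hPA := hnumA.mul hminv
  have hQA := hnumAI.mul hminv
  -- === side B: derivative data at z ===
  obtain ⟨LrG, hLrG, hLrGv⟩ := hasFDerivAt_reC ((hgd z hz).add (hhd z hz))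
  have hrGpos : 0 < (g z + h z).re := by
    have := hFre z hz
    simpa using this
  obtain ⟨Lr2, hLr2, hLr2v⟩ := hasFDerivAt_reC ((hg2 z hz).add (hh2 z hz))
  obtain ⟨Lr2I, hLr2I, hLr2Iv⟩ := hasFDerivAt_reC (((hg2 z hz).add (hh2 z hz)).const_mul I)
  have hlog1 : HasFDerivAt (fun y => Real.log ((g y + h y).re) + 1)
      (((g z + h z).re)⁻¹ • LrG) z :=
    by have := ((Real.hasDerivAt_log (ne_of_gt hrGpos)).comp_hasFDerivAt z hLrG).add_const 1; exact this
  have hPB := hlog1.mul hLr2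
  have hQB := hlog1.mul hLr2I
  -- === apply the master lemma on each side ===
  have hA := lap2_eq_of (w := fun y => ‖g y + (starRingEnd ℂ) (h y)‖)
    (p := fun y => ((deriv g y + (starRingEnd ℂ) (deriv h y))
        * (starRingEnd ℂ) (g y + (starRingEnd ℂ) (h y))).re
        * (‖g y + (starRingEnd ℂ) (h y)‖)⁻¹)
    (q := fun y => ((I * deriv g y + (starRingEnd ℂ) (I * deriv h y))
        * (starRingEnd ℂ) (g y + (starRingEnd ℂ) (h y))).re
        * (‖g y + (starRingEnd ℂ) (h y)‖)⁻¹)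
    hso hz
    (by
      intro y hy
      obtain ⟨LFy, hLFy, hLFyv⟩ := hasFDerivAt_addconj (hgd y hy) (hhd y hy)
      obtain ⟨Ly, hLy, hLyv⟩ := hasFDerivAt_abs_comp hLFy (hFne y hy)
      refine ⟨Ly, hLy, ?_, ?_⟩
      · rw [hLyv 1, hLFyv 1, div_eq_mul_inv]; simp
      · rw [hLyv I, hLFyv I, div_eq_mul_inv])
    hPA hQA
  have hB := lap2_eq_of (w := fun y => (g y + h y).re * Real.log ((g y + h y).re))
    (p := fun y => (Real.log ((g y + h y).re) + 1) * (deriv g y + deriv h y).re)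
    (q := fun y => (Real.log ((g y + h y).re) + 1) * (I * (deriv g y + deriv h y)).re)
    hso hz
    (by
      intro y hy
      obtain ⟨LrGy, hLrGy, hLrGyv⟩ := hasFDerivAt_reC ((hgd y hy).add (hhd y hy))
      have hry : 0 < (g y + h y).re := by simpa using hFre y hy
      obtain ⟨Ly, hLy, hLyv⟩ := hasFDerivAt_xlogx_comp hLrGy hry
      refine ⟨Ly, hLy, ?_, ?_⟩
      · rw [hLyv 1, hLrGyv 1]; simp
      · rw [hLyv I, hLrGyv I]; rfl)
    hPB hQB
  rw [hA, hB]
  simp only [ContinuousLinearMap.add_apply, ContinuousLinearMap.coe_smul', Pi.smul_apply,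
    smul_eq_mul, ContinuousLinearMap.coe_comp', Function.comp_apply, Complex.reCLM_apply,
    ContinuousLinearEquiv.coe_coe, Complex.conjCLE_apply, hLFv, hLav, hLaIv, hLmv, hLrGv,
    hLr2v, hLr2Iv]
  have key := final_ineq K hK (deriv g z) (deriv h z) (g z + (starRingEnd ℂ) (h z))
    (hFre z hz) (hqr z hz)
  have e1 : ‖deriv g z‖^2 = (deriv g z).re^2 + (deriv g z).im^2 := by
    rw [Complex.sq_norm, Complex.normSq_apply]; ring
  have e2 : ‖deriv h z‖^2 = (deriv h z).re^2 + (deriv h z).im^2 := by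
    rw [Complex.sq_norm, Complex.normSq_apply]; ring
  have e3 : ‖deriv g z + deriv h z‖^2
      = (deriv g z + deriv h z).re^2 + (deriv g z + deriv h z).im^2 := by
    rw [Complex.sq_norm, Complex.normSq_apply]; ring
  refine le_trans (le_of_eq ?_) (key.trans (le_of_eq ?_))
  · rw [e1, e2]
    simp only [Complex.mul_re, Complex.mul_im,
      Complex.add_re, Complex.add_im, Complex.conj_re, Complex.conj_im, Complex.I_re,
      Complex.I_im, Complex.one_re, Complex.one_im]
    field_simp
    ring
  · rw [e3]
    simp only [Pi.add_apply, Complex.mul_re, Complex.mul_im,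
      Complex.add_re, Complex.add_im, Complex.conj_re, Complex.conj_im, Complex.I_re,
      Complex.I_im, Complex.one_re, Complex.one_im]
    field_simp
    ring
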